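/- Let B be a real n×n matrix with det B ≥ 0, and let R be the unique symmetric positive semidefinite square root of Bᵀ B. Then: (i) there exists Q ∈ SO(n) with Q R = B; (ii) for every Q ∈ SO(n), trace(Qᵀ B) ≤ trace(R); and (iii) Q ∈ SO(n) satisfies trace(Qᵀ B) = trace(R) if and only if Q R = B. Hence the maximizers of Q ↦ trace(Qᵀ B) over SO(n) are exactly the special orthogonal polar factors of B. -/

import Mathlib

open Matrix

lemma orth_diag_le {n : ℕ} (M : Matrix (Fin n) (Fin n) ℝ) (hM : Mᵀ * M = 1) (i : Fin n) :
    M i i ≤ 1 ∧ (M i i = 1 → ∀ j, M j i = if j = i then 1 else 0) := by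
  have hcol : ∑ j, (M j i)^2 = 1 := by
    have := congrFun (congrFun hM i) i
    simpa [Matrix.mul_apply, Matrix.one_apply, sq] using this
  have hsq : (M i i)^2 ≤ 1 := by
    rw [← hcol]
    exact Finset.single_le_sum (f := fun j => (M j i)^2) (fun j _ => sq_nonneg _) (Finset.mem_univ i)
  constructor
  · nlinarith [sq_nonneg (M i i - 1), sq_nonneg (M i i + 1)]
  · intro h1 j
    by_cases hj : j = i
    · simp [hj, h1]
    · simp only [hj, if_false]
      have hrest : ∑ j ∈ Finset.univ.erase i, (M j i)^2 = 0 := by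
        have h2 := Finset.add_sum_erase Finset.univ (fun j => (M j i)^2) (Finset.mem_univ i)
        rw [← h2, h1] at hcol; linarith
      have := Finset.sum_eq_zero_iff_of_nonneg (fun j _ => sq_nonneg (M j i)) |>.mp hrest j
        (Finset.mem_erase.mpr ⟨hj, Finset.mem_univ j⟩)
      exact pow_eq_zero_iff (by norm_num) |>.mp this

lemma key_trace {n : ℕ} (P R : Matrix (Fin n) (Fin n) ℝ) (hP : Pᵀ * P = 1)
    (hR : R.PosSemidef) :
    (P * R).trace ≤ R.trace ∧ ((P * R).trace = R.trace ↔ P * R = R) := by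
  set U : Matrix (Fin n) (Fin n) ℝ := (hR.1.eigenvectorUnitary : Matrix (Fin n) (Fin n) ℝ)
    with hUdef
  set d : Fin n → ℝ := hR.1.eigenvalues with hddef
  have hd : ∀ i, 0 ≤ d i := hR.eigenvalues_nonneg
  have hspec : R = U * diagonal d * Uᵀ := by
    have := hR.1.spectral_theorem
    simpa [hUdef, hddef, Function.comp, Matrix.star_eq_conjTranspose, Matrix.conjTranspose_eq_transpose_of_trivial] using this
  have hU1 : Uᵀ * U = 1 := by
    have h := Matrix.mem_unitaryGroup_iff'.mp (hR.1.eigenvectorUnitary).2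
    rw [hUdef]
    rw [Matrix.star_eq_conjTranspose, Matrix.conjTranspose_eq_transpose_of_trivial] at h
    convert h using 2
  have hU2 : U * Uᵀ = 1 := by
    have h := Matrix.mem_unitaryGroup_iff.mp (hR.1.eigenvectorUnitary).2
    rw [hUdef]
    rw [Matrix.star_eq_conjTranspose, Matrix.conjTranspose_eq_transpose_of_trivial] at h
    convert h using 2
  set M : Matrix (Fin n) (Fin n) ℝ := Uᵀ * P * U with hMdef
  have hMorth : Mᵀ * M = 1 := by
    simp only [hMdef, transpose_mul, transpose_transpose, Matrix.mul_assoc]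
    rw [← Matrix.mul_assoc U Uᵀ, hU2, one_mul, ← Matrix.mul_assoc Pᵀ P, hP, one_mul, hU1]
  have hPR : P * R = U * (M * diagonal d) * Uᵀ := by
    rw [hspec, hMdef]
    simp only [Matrix.mul_assoc]
    rw [← Matrix.mul_assoc U Uᵀ, hU2, one_mul]
  have htrR : R.trace = ∑ i, d i := by
    rw [hspec, Matrix.trace_mul_cycle, hU1, one_mul, trace_diagonal]
  have htrPR : (P * R).trace = ∑ i, M i i * d i := by
    rw [hPR, Matrix.trace_mul_cycle, hU1, one_mul]
    simp [Matrix.trace, Matrix.diag, Matrix.mul_apply, diagonal]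
  have hterm : ∀ i : Fin n, M i i * d i ≤ d i := fun i =>
    mul_le_of_le_one_left (hd i) (orth_diag_le M hMorth i).1
  constructor
  · rw [htrR, htrPR]
    exact Finset.sum_le_sum fun i _ => hterm i
  · constructor
    · intro heq
      rw [htrR, htrPR] at heq
      have hall : ∀ i ∈ Finset.univ, M i i * d i = d i :=
        (Finset.sum_eq_sum_iff_of_le (fun i _ => hterm i)).mp heq
      have hMD : M * diagonal d = diagonal d := by
        ext j i
        rw [Matrix.mul_diagonal]
        by_cases hdi : d i = 0
        · by_cases hj : j = i
          · subst hj; simp [diagonal, hdi]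
          · simp [diagonal, hj, hdi]
        · have hMii : M i i = 1 := by
            refine mul_right_cancel₀ hdi ?_
            rw [one_mul]; exact hall i (Finset.mem_univ i)
          have := (orth_diag_le M hMorth i).2 hMii j
          rw [this]
          by_cases hj : j = i <;> simp [diagonal, hj]
      rw [hPR, hMD, ← hspec]
    · intro h
      rw [h]

lemma exists_polar {n : ℕ} (B R : Matrix (Fin n) (Fin n) ℝ) (hdet : 0 ≤ B.det)
    (hR : R.PosSemidef) (hRR : R * R = Bᵀ * B) :
    ∃ Q : Matrix (Fin n) (Fin n) ℝ, Qᵀ * Q = 1 ∧ Q.det = 1 ∧ Q * R = B := by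
  set U : Matrix (Fin n) (Fin n) ℝ := (hR.1.eigenvectorUnitary : Matrix (Fin n) (Fin n) ℝ)
    with hUdef
  set d : Fin n → ℝ := hR.1.eigenvalues with hddef
  have hd : ∀ i, 0 ≤ d i := hR.eigenvalues_nonneg
  have hspec : R = U * diagonal d * Uᵀ := by
    have := hR.1.spectral_theorem
    simpa [hUdef, hddef, Function.comp, Matrix.star_eq_conjTranspose, Matrix.conjTranspose_eq_transpose_of_trivial] using this
  have hU1 : Uᵀ * U = 1 := by
    have h := Matrix.mem_unitaryGroup_iff'.mp (hR.1.eigenvectorUnitary).2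
    rw [hUdef]; rw [Matrix.star_eq_conjTranspose, Matrix.conjTranspose_eq_transpose_of_trivial] at h; convert h using 2
  have hU2 : U * Uᵀ = 1 := by
    have h := Matrix.mem_unitaryGroup_iff.mp (hR.1.eigenvectorUnitary).2
    rw [hUdef]; rw [Matrix.star_eq_conjTranspose, Matrix.conjTranspose_eq_transpose_of_trivial] at h; convert h using 2
  clear_value U d
  set N : Matrix (Fin n) (Fin n) ℝ := Uᵀ * B * U with hNdef
  -- N^T N = D^2
  have hNN : Nᵀ * N = diagonal d * diagonal d := by
    have hR2 : R * R = U * (diagonal d * diagonal d) * Uᵀ := by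
      rw [hspec]
      simp only [Matrix.mul_assoc]
      rw [← Matrix.mul_assoc Uᵀ U, hU1, one_mul]
    simp only [hNdef, transpose_mul, transpose_transpose]
    calc Uᵀ * (Bᵀ * U) * (Uᵀ * B * U)
        = Uᵀ * (Bᵀ * ((U * Uᵀ) * (B * U))) := by simp only [Matrix.mul_assoc]
      _ = Uᵀ * ((Bᵀ * B) * U) := by rw [hU2, one_mul]; simp only [Matrix.mul_assoc]
      _ = Uᵀ * (U * (diagonal d * diagonal d) * Uᵀ * U) := by rw [← hRR, hR2]
      _ = diagonal d * diagonal d := by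
          simp only [Matrix.mul_assoc]
          rw [hU1, ← Matrix.mul_assoc Uᵀ U, hU1, one_mul, mul_one]
  have hcol : ∀ i k : Fin n, ∑ j, N j i * N j k = if i = k then d i * d k else 0 := by
    intro i k
    have := congrFun (congrFun hNN i) k
    simpa [Matrix.mul_apply, diagonal, Matrix.transpose_apply, eq_comm] using this
  -- columns of N with d i ≠ 0, normalized, are orthonormal
  set v : Fin n → EuclideanSpace ℝ (Fin n) := fun i => WithLp.toLp 2 (fun j => (d i)⁻¹ * N j i) with hvdef
  have hv : Orthonormal ℝ (Set.restrict {i | d i ≠ 0} v) := by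
    rw [orthonormal_iff_ite]
    rintro ⟨i, hi⟩ ⟨k, hk⟩
    change inner ℝ (v i) (v k) = _
    have : (inner ℝ (v i) (v k) : ℝ) = (d i)⁻¹ * (d k)⁻¹ * ∑ j, N j i * N j k := by
      simp [hvdef, PiLp.inner_apply, Finset.mul_sum]
      congr 1; ext j; ring
    rw [this, hcol i k]
    by_cases hik : i = k
    · subst hik
      simp only [if_pos rfl, Subtype.mk.injEq, if_pos rfl, if_true]
      have hne : d i ≠ 0 := hi
      field_simp
    · have : (⟨i, hi⟩ : {i | d i ≠ 0}) ≠ ⟨k, hk⟩ := by simp [hik]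
      simp [hik, this]
  obtain ⟨b, hb⟩ := hv.exists_orthonormalBasis_extension_of_card_eq
    (by simp [finrank_euclideanSpace_fin])
  set M₀ : Matrix (Fin n) (Fin n) ℝ := Matrix.of (fun j i => b i j) with hM0def
  have hM0orth : M₀ᵀ * M₀ = 1 := by
    ext i k
    have := orthonormal_iff_ite.mp b.orthonormal i k
    simp only [PiLp.inner_apply, RCLike.inner_apply, starRingEnd_apply, star_trivial] at this
    simpa [hM0def, Matrix.mul_apply, Matrix.one_apply, mul_comm] using this
  have hNzero : ∀ i, d i = 0 → ∀ j, N j i = 0 := by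
    intro i hdi j
    have h0 : ∑ j, N j i * N j i = 0 := by rw [hcol i i, if_pos rfl, hdi, mul_zero]
    have := Finset.sum_eq_zero_iff_of_nonneg
      (fun j _ => mul_self_nonneg (N j i)) |>.mp h0 j (Finset.mem_univ j)
    exact mul_self_eq_zero.mp this
  have hM0D : M₀ * diagonal d = N := by
    ext j i
    rw [Matrix.mul_diagonal]
    by_cases hdi : d i = 0
    · rw [hdi, mul_zero, hNzero i hdi j]
    · have hbi := hb i hdi
      have : M₀ j i = (d i)⁻¹ * N j i := by
        rw [hM0def]
        show (b i) j = _
        rw [hbi]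
      rw [this]
      field_simp
  have hdetM0sq : M₀.det ^ 2 = 1 := by
    have := congrArg Matrix.det hM0orth
    rwa [det_mul, det_transpose, det_one, ← sq] at this
  have hdetN : N.det = B.det := by
    have h1 : (Uᵀ * U).det = 1 := by rw [hU1, det_one]
    rw [det_mul] at h1
    rw [hNdef, det_mul, det_mul]
    linear_combination B.det * h1
  have hdetR : R.det = ∏ i, d i := by
    have : (Uᵀ * U).det = 1 := by rw [hU1, det_one]
    rw [det_mul] at this
    rw [hspec, det_mul, det_mul, det_diagonal, det_transpose]
    rw [det_transpose] at this
    linear_combination (∏ i, d i) * this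
  have hdetBR : B.det = ∏ i, d i := by
    have h1 : (∏ i, d i) ^ 2 = B.det ^ 2 := by
      have h2 := congrArg Matrix.det hRR
      rw [det_mul, det_mul, det_transpose, hdetR, ← sq, ← sq] at h2
      exact h2
    have h2 : 0 ≤ ∏ i, d i := Finset.prod_nonneg fun i _ => hd i
    nlinarith
  -- case split
  by_cases hsing : ∃ i₀, d i₀ = 0
  · obtain ⟨i₀, hi₀⟩ := hsing
    set ε : ℝ := M₀.det with hε
    set S : Matrix (Fin n) (Fin n) ℝ := diagonal (fun i => if i = i₀ then ε else 1) with hS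
    set M : Matrix (Fin n) (Fin n) ℝ := M₀ * S with hM
    have hSS : S * S = 1 := by
      rw [hS, diagonal_mul_diagonal]
      have : (fun i => (if i = i₀ then ε else 1) * (if i = i₀ then ε else 1))
          = fun _ : Fin n => (1:ℝ) := by
        funext i
        by_cases hi : i = i₀
        · simp only [hi, if_pos rfl, ← sq]; exact hdetM0sq
        · simp [hi]
      rw [this, diagonal_one]
    have hSt : Sᵀ = S := by rw [hS, diagonal_transpose]
    have hMorth : Mᵀ * M = 1 := by
      rw [hM, transpose_mul, hSt]
      calc S * M₀ᵀ * (M₀ * S) = S * (M₀ᵀ * M₀) * S := by simp only [Matrix.mul_assoc]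
        _ = 1 := by rw [hM0orth, mul_one, hSS]
    have hdetM : M.det = 1 := by
      rw [hM, det_mul, hS, det_diagonal]
      have : (∏ i, if i = i₀ then ε else 1) = ε := by
        rw [Finset.prod_ite_eq' Finset.univ i₀ (fun _ => ε)]
        simp
      rw [this, hε, ← sq]
      exact hdetM0sq
    have hMD : M * diagonal d = N := by
      rw [hM, Matrix.mul_assoc, hS, diagonal_mul_diagonal, ← hM0D]
      have hfun : (fun i => (if i = i₀ then ε else 1) * d i) = d := by
        funext i
        by_cases hi : i = i₀ <;> simp [hi, hi₀]
      rw [hfun]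
    exact ⟨U * M * Uᵀ, by
      constructor
      · simp only [transpose_mul, transpose_transpose]
        calc U * (Mᵀ * Uᵀ) * (U * M * Uᵀ) = U * (Mᵀ * ((Uᵀ * U) * (M * Uᵀ))) := by
              simp only [Matrix.mul_assoc]
          _ = U * (Mᵀ * M * Uᵀ) := by rw [hU1, one_mul]; simp only [Matrix.mul_assoc]
          _ = 1 := by rw [hMorth, one_mul, hU2]
      constructor
      · have h1 : (Uᵀ * U).det = 1 := by rw [hU1, det_one]
        rw [det_mul] at h1
        rw [det_mul, det_mul, hdetM]
        linear_combination h1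
      · calc U * M * Uᵀ * R = U * (M * ((Uᵀ * U) * (diagonal d * Uᵀ))) := by
              rw [hspec]; simp only [Matrix.mul_assoc]
          _ = U * (M * diagonal d) * Uᵀ := by rw [hU1, one_mul]; simp only [Matrix.mul_assoc]
          _ = U * (Uᵀ * B * (U * Uᵀ)) := by rw [hMD, hNdef]; simp only [Matrix.mul_assoc]
          _ = B := by rw [hU2, mul_one, ← Matrix.mul_assoc, hU2, one_mul]⟩
  · push_neg at hsing
    have hprod : (∏ i, d i) ≠ 0 := Finset.prod_ne_zero_iff.mpr fun i _ => hsing i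
    have hdetM0 : M₀.det = 1 := by
      have := congrArg Matrix.det hM0D
      rw [det_mul, det_diagonal, hdetN, hdetBR] at this
      field_simp at this
      exact this
    exact ⟨U * M₀ * Uᵀ, by
      constructor
      · simp only [transpose_mul, transpose_transpose]
        calc U * (M₀ᵀ * Uᵀ) * (U * M₀ * Uᵀ) = U * (M₀ᵀ * ((Uᵀ * U) * (M₀ * Uᵀ))) := by
              simp only [Matrix.mul_assoc]
          _ = U * (M₀ᵀ * M₀ * Uᵀ) := by rw [hU1, one_mul]; simp only [Matrix.mul_assoc]
          _ = 1 := by rw [hM0orth, one_mul, hU2]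
      constructor
      · have h1 : (Uᵀ * U).det = 1 := by rw [hU1, det_one]
        rw [det_mul] at h1
        rw [det_mul, det_mul, hdetM0]
        linear_combination h1
      · calc U * M₀ * Uᵀ * R = U * (M₀ * ((Uᵀ * U) * (diagonal d * Uᵀ))) := by
              rw [hspec]; simp only [Matrix.mul_assoc]
          _ = U * (M₀ * diagonal d) * Uᵀ := by rw [hU1, one_mul]; simp only [Matrix.mul_assoc]
          _ = U * (Uᵀ * B * (U * Uᵀ)) := by rw [hM0D, hNdef]; simp only [Matrix.mul_assoc]
          _ = B := by rw [hU2, mul_one, ← Matrix.mul_assoc, hU2, one_mul]⟩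

theorem stmt7 {n : ℕ} (B R : Matrix (Fin n) (Fin n) ℝ) (hdet : 0 ≤ B.det)
    (hR : R.PosSemidef) (hRR : R * R = Bᵀ * B) :
    (∃ Q : Matrix (Fin n) (Fin n) ℝ, Qᵀ * Q = 1 ∧ Q.det = 1 ∧ Q * R = B)
    ∧ (∀ Q : Matrix (Fin n) (Fin n) ℝ, Qᵀ * Q = 1 → Q.det = 1 →
        (Qᵀ * B).trace ≤ R.trace)
    ∧ (∀ Q : Matrix (Fin n) (Fin n) ℝ, Qᵀ * Q = 1 → Q.det = 1 →
        ((Qᵀ * B).trace = R.trace ↔ Q * R = B)) := by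
  obtain ⟨Q₀, hQ₀o, hQ₀d, hQ₀R⟩ := exists_polar B R hdet hR hRR
  have hfacts : ∀ Q : Matrix (Fin n) (Fin n) ℝ, Qᵀ * Q = 1 →
      (Qᵀ * B).trace ≤ R.trace ∧ ((Qᵀ * B).trace = R.trace ↔ Q * R = B) := by
    intro Q hQo
    have hQQt : Q * Qᵀ = 1 := mul_eq_one_comm.mp hQo
    set P : Matrix (Fin n) (Fin n) ℝ := Qᵀ * Q₀ with hPdef
    have hPo : Pᵀ * P = 1 := by
      rw [hPdef, transpose_mul, transpose_transpose]
      calc Q₀ᵀ * Q * (Qᵀ * Q₀) = Q₀ᵀ * ((Q * Qᵀ) * Q₀) := by simp only [Matrix.mul_assoc]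
        _ = 1 := by rw [hQQt, one_mul, hQ₀o]
    have hQB : Qᵀ * B = P * R := by
      rw [hPdef, ← hQ₀R, Matrix.mul_assoc]
    obtain ⟨hle, hiff⟩ := key_trace P R hPo hR
    rw [← hQB] at hle hiff
    refine ⟨hle, hiff.trans ?_⟩
    constructor
    · intro hPR
      have := congrArg (fun X => Q * X) hPR
      rw [← Matrix.mul_assoc, hQQt, one_mul] at this
      rw [this]
    · intro hQR
      rw [← hQR, ← Matrix.mul_assoc, hQo, one_mul]
  exact ⟨⟨Q₀, hQ₀o, hQ₀d, hQ₀R⟩, fun Q hQo _ => (hfacts Q hQo).1,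
    fun Q hQo _ => (hfacts Q hQo).2⟩
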